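/- Let n ≥ 3 and consider the polynomial ring ℂ[x₁,…,xₙ,u₀,u₁,…,u_{n−1}] and the ideal generated by: x₁u₁−x₂u₀, x₁u₂−x₂u₁, x₁²−xₙu₀, x₁x₂−xₙu₁, x₂²−xₙu₂, and, for all 3 ≤ i, j ≤ n−1, the elements x₁²uᵢ−xᵢu₀, x₁x₂uᵢ−xᵢu₁, x₂²uᵢ−xᵢu₂, xᵢ−xₙuᵢ and xᵢuⱼ−xⱼuᵢ. Then the quotient ring is isomorphic as a ℂ-algebra to the polynomial ring in the n−3 variables u₃,…,u_{n−1} over the ring A = ℂ[x₁,x₂,xₙ,u₀,u₁,u₂]/(x₁u₁−x₂u₀, x₁u₂−x₂u₁, x₁²−xₙu₀, x₁x₂−xₙu₁, x₂²−xₙu₂). -/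

import Mathlib

open MvPolynomial
open MvPolynomial

noncomputable section Stmt11Aux

def J6 : Ideal (MvPolynomial (Fin 6) ℂ) :=
  Ideal.span {(X 0 * X 4 - X 1 * X 3 : MvPolynomial (Fin 6) ℂ),
    X 0 * X 5 - X 1 * X 4, X 0 ^ 2 - X 2 * X 3,
    X 0 * X 1 - X 2 * X 4, X 1 ^ 2 - X 2 * X 5}

abbrev A6 : Type := MvPolynomial (Fin 6) ℂ ⧸ J6

def av (i : Fin 6) : A6 := Ideal.Quotient.mk J6 (X i)

def SGen (n : ℕ) (hn : n ≥ 3) : Set (MvPolynomial (Fin n ⊕ Fin n) ℂ) :=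
  ({X (Sum.inl ⟨0, by omega⟩) * X (Sum.inr ⟨1, by omega⟩) -
       X (Sum.inl ⟨1, by omega⟩) * X (Sum.inr ⟨0, by omega⟩),
     X (Sum.inl ⟨0, by omega⟩) * X (Sum.inr ⟨2, by omega⟩) -
       X (Sum.inl ⟨1, by omega⟩) * X (Sum.inr ⟨1, by omega⟩),
     X (Sum.inl ⟨0, by omega⟩) ^ 2 -
       X (Sum.inl ⟨n - 1, by omega⟩) * X (Sum.inr ⟨0, by omega⟩),
     X (Sum.inl ⟨0, by omega⟩) * X (Sum.inl ⟨1, by omega⟩) -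
       X (Sum.inl ⟨n - 1, by omega⟩) * X (Sum.inr ⟨1, by omega⟩),
     X (Sum.inl ⟨1, by omega⟩) ^ 2 -
       X (Sum.inl ⟨n - 1, by omega⟩) * X (Sum.inr ⟨2, by omega⟩)} ∪
    {p | ∃ i : Fin n, 3 ≤ (i : ℕ) ∧ (i : ℕ) ≤ n - 1 ∧
       p = X (Sum.inl ⟨0, by omega⟩) ^ 2 * X (Sum.inr i) -
         X (Sum.inl ⟨(i : ℕ) - 1, Nat.lt_of_le_of_lt (Nat.sub_le _ _) i.isLt⟩) *
           X (Sum.inr ⟨0, by omega⟩)} ∪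
    {p | ∃ i : Fin n, 3 ≤ (i : ℕ) ∧ (i : ℕ) ≤ n - 1 ∧
       p = X (Sum.inl ⟨0, by omega⟩) * X (Sum.inl ⟨1, by omega⟩) * X (Sum.inr i) -
         X (Sum.inl ⟨(i : ℕ) - 1, Nat.lt_of_le_of_lt (Nat.sub_le _ _) i.isLt⟩) *
           X (Sum.inr ⟨1, by omega⟩)} ∪
    {p | ∃ i : Fin n, 3 ≤ (i : ℕ) ∧ (i : ℕ) ≤ n - 1 ∧
       p = X (Sum.inl ⟨1, by omega⟩) ^ 2 * X (Sum.inr i) -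
         X (Sum.inl ⟨(i : ℕ) - 1, Nat.lt_of_le_of_lt (Nat.sub_le _ _) i.isLt⟩) *
           X (Sum.inr ⟨2, by omega⟩)} ∪
    {p | ∃ i : Fin n, 3 ≤ (i : ℕ) ∧ (i : ℕ) ≤ n - 1 ∧
       p = X (Sum.inl ⟨(i : ℕ) - 1, Nat.lt_of_le_of_lt (Nat.sub_le _ _) i.isLt⟩) -
         X (Sum.inl ⟨n - 1, by omega⟩) * X (Sum.inr i)} ∪
    {p | ∃ i j : Fin n, 3 ≤ (i : ℕ) ∧ (i : ℕ) ≤ n - 1 ∧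
       3 ≤ (j : ℕ) ∧ (j : ℕ) ≤ n - 1 ∧
       p = X (Sum.inl ⟨(i : ℕ) - 1, Nat.lt_of_le_of_lt (Nat.sub_le _ _) i.isLt⟩) * X (Sum.inr j) -
         X (Sum.inl ⟨(j : ℕ) - 1, Nat.lt_of_le_of_lt (Nat.sub_le _ _) j.isLt⟩) * X (Sum.inr i)} :
    Set (MvPolynomial (Fin n ⊕ Fin n) ℂ))

def Iid (n : ℕ) (hn : n ≥ 3) : Ideal (MvPolynomial (Fin n ⊕ Fin n) ℂ) :=
  Ideal.span (SGen n hn)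

def vfun (n : ℕ) : Fin n ⊕ Fin n → MvPolynomial (Fin (n - 3)) A6
  | Sum.inl k =>
    if _h0 : (k : ℕ) = 0 then C (av 0)
    else if _h1 : (k : ℕ) = 1 then C (av 1)
    else if _h2 : (k : ℕ) = n - 1 then C (av 2)
    else C (av 2) * X ⟨(k : ℕ) - 2, by have := k.isLt; omega⟩
  | Sum.inr k =>
    if _h : (k : ℕ) < 3 then C (av ⟨(k : ℕ) + 3, by omega⟩)
    else X ⟨(k : ℕ) - 3, by have := k.isLt; omega⟩

section
variable (n : ℕ) (hn : n ≥ 3)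

lemma vfun_inl0 : vfun n (Sum.inl ⟨0, by omega⟩) = C (av 0) := by simp [vfun]

lemma vfun_inl1 : vfun n (Sum.inl ⟨1, by omega⟩) = C (av 1) := by simp [vfun]

lemma vfun_inlN : vfun n (Sum.inl ⟨n - 1, by omega⟩) = C (av 2) := by
  simp only [vfun]
  rw [dif_neg (by omega), dif_neg (by omega)]; simp

lemma vfun_inlMid (k : Fin n) (h2 : 2 ≤ (k : ℕ)) (hk : (k : ℕ) ≤ n - 2) :
    vfun n (Sum.inl k) = C (av 2) * X ⟨(k : ℕ) - 2, by have := k.isLt; omega⟩ := by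
  simp only [vfun]
  rw [dif_neg (by omega), dif_neg (by omega), dif_neg (by omega)]

lemma vfun_inr_lt (k : Fin n) (h : (k : ℕ) < 3) :
    vfun n (Sum.inr k) = C (av ⟨(k : ℕ) + 3, by omega⟩) := by
  simp only [vfun]; rw [dif_pos h]

lemma vfun_inr_ge (k : Fin n) (h : 3 ≤ (k : ℕ)) :
    vfun n (Sum.inr k) = X ⟨(k : ℕ) - 3, by have := k.isLt; omega⟩ := by
  simp only [vfun]; rw [dif_neg (by omega)]

lemma av_rel1 : av 0 * av 4 - av 1 * av 3 = 0 := by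
  have : (Ideal.Quotient.mk J6) (X 0 * X 4 - X 1 * X 3) = 0 := by
    rw [Ideal.Quotient.eq_zero_iff_mem]
    exact Ideal.subset_span (by simp)
  simpa [av] using this

lemma av_rel2 : av 0 * av 5 - av 1 * av 4 = 0 := by
  have : (Ideal.Quotient.mk J6) (X 0 * X 5 - X 1 * X 4) = 0 := by
    rw [Ideal.Quotient.eq_zero_iff_mem]
    exact Ideal.subset_span (by simp)
  simpa [av] using this

lemma av_rel3 : av 0 ^ 2 - av 2 * av 3 = 0 := by
  have : (Ideal.Quotient.mk J6) (X 0 ^ 2 - X 2 * X 3) = 0 := by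
    rw [Ideal.Quotient.eq_zero_iff_mem]
    exact Ideal.subset_span (by simp)
  simpa [av] using this

lemma av_rel4 : av 0 * av 1 - av 2 * av 4 = 0 := by
  have : (Ideal.Quotient.mk J6) (X 0 * X 1 - X 2 * X 4) = 0 := by
    rw [Ideal.Quotient.eq_zero_iff_mem]
    exact Ideal.subset_span (by simp)
  simpa [av] using this

lemma av_rel5 : av 1 ^ 2 - av 2 * av 5 = 0 := by
  have : (Ideal.Quotient.mk J6) (X 1 ^ 2 - X 2 * X 5) = 0 := by
    rw [Ideal.Quotient.eq_zero_iff_mem]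
    exact Ideal.subset_span (by simp)
  simpa [av] using this

end
section
variable (n : ℕ) (hn : n ≥ 3)

lemma vfun_inr0 : vfun n (Sum.inr ⟨0, by omega⟩) = C (av 3) := by simp [vfun]
lemma vfun_inr1 : vfun n (Sum.inr ⟨1, by omega⟩) = C (av 4) := by simp [vfun]
lemma vfun_inr2 : vfun n (Sum.inr ⟨2, by omega⟩) = C (av 5) := by simp [vfun]

lemma vfun_inl_i (i : Fin n) (h3 : 3 ≤ (i : ℕ)) (hi : (i : ℕ) ≤ n - 1) :
    vfun n (Sum.inl ⟨(i : ℕ) - 1, Nat.lt_of_le_of_lt (Nat.sub_le _ _) i.isLt⟩) =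
      C (av 2) * X ⟨(i : ℕ) - 3, by have := i.isLt; omega⟩ := by
  rw [vfun_inlMid n hn ⟨(i : ℕ) - 1, by have := i.isLt; omega⟩ (by simp; omega) (by simp; omega)]
  simp [Nat.sub_sub]

lemma hkill : ∀ p ∈ SGen n hn, aeval (vfun n) p = 0 := by
  have h1 := av_rel1; have h2 := av_rel2; have h3 := av_rel3
  have h4 := av_rel4; have h5 := av_rel5
  rw [sub_eq_zero] at h1 h2 h3 h4 h5
  intro p hp
  rcases hp with (((((hp | hp) | hp) | hp) | hp) | hp)
  · simp only [Set.mem_insert_iff, Set.mem_singleton_iff] at hp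
    rcases hp with rfl | rfl | rfl | rfl | rfl
    · rw [map_sub, map_mul, map_mul, aeval_X, aeval_X, aeval_X, aeval_X,
        vfun_inl0 n hn, vfun_inl1 n hn, vfun_inr0 n hn, vfun_inr1 n hn, ← C_mul, ← C_mul, h1, sub_self]
    · rw [map_sub, map_mul, map_mul, aeval_X, aeval_X, aeval_X, aeval_X,
        vfun_inl0 n hn, vfun_inl1 n hn, vfun_inr1 n hn, vfun_inr2 n hn, ← C_mul, ← C_mul, h2, sub_self]
    · rw [map_sub, map_pow, map_mul, aeval_X, aeval_X, aeval_X,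
        vfun_inl0 n hn, vfun_inlN n hn, vfun_inr0 n hn, ← C_pow, ← C_mul, h3, sub_self]
    · rw [map_sub, map_mul, map_mul, aeval_X, aeval_X, aeval_X, aeval_X,
        vfun_inl0 n hn, vfun_inl1 n hn, vfun_inlN n hn, vfun_inr1 n hn, ← C_mul, ← C_mul, h4, sub_self]
    · rw [map_sub, map_pow, map_mul, aeval_X, aeval_X, aeval_X,
        vfun_inl1 n hn, vfun_inlN n hn, vfun_inr2 n hn, ← C_pow, ← C_mul, h5, sub_self]
  · obtain ⟨i, hi3, hin, rfl⟩ := hp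
    rw [map_sub, map_mul, map_mul, map_pow, aeval_X, aeval_X, aeval_X, aeval_X,
      vfun_inl0 n hn, vfun_inl_i n hn i hi3 hin, vfun_inr_ge n hn i hi3, vfun_inr0 n hn,
      ← C_pow, h3, C_mul]
    ring
  · obtain ⟨i, hi3, hin, rfl⟩ := hp
    rw [map_sub, map_mul, map_mul, map_mul, aeval_X, aeval_X, aeval_X, aeval_X, aeval_X,
      vfun_inl0 n hn, vfun_inl1 n hn, vfun_inl_i n hn i hi3 hin, vfun_inr_ge n hn i hi3, vfun_inr1 n hn,
      ← C_mul, h4, C_mul]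
    ring
  · obtain ⟨i, hi3, hin, rfl⟩ := hp
    rw [map_sub, map_mul, map_mul, map_pow, aeval_X, aeval_X, aeval_X, aeval_X,
      vfun_inl1 n hn, vfun_inl_i n hn i hi3 hin, vfun_inr_ge n hn i hi3, vfun_inr2 n hn,
      ← C_pow, h5, C_mul]
    ring
  · obtain ⟨i, hi3, hin, rfl⟩ := hp
    rw [map_sub, map_mul, aeval_X, aeval_X, aeval_X,
      vfun_inl_i n hn i hi3 hin, vfun_inlN n hn, vfun_inr_ge n hn i hi3, sub_self]
  · obtain ⟨i, j, hi3, hin, hj3, hjn, rfl⟩ := hp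
    rw [map_sub, map_mul, map_mul, aeval_X, aeval_X, aeval_X, aeval_X,
      vfun_inl_i n hn i hi3 hin, vfun_inl_i n hn j hj3 hjn,
      vfun_inr_ge n hn i hi3, vfun_inr_ge n hn j hj3]
    ring

end

section
variable (n : ℕ) (hn : n ≥ 3)

noncomputable def phiBar :
    (MvPolynomial (Fin n ⊕ Fin n) ℂ ⧸ Iid n hn) →ₐ[ℂ] MvPolynomial (Fin (n - 3)) A6 :=
  Ideal.Quotient.liftₐ (Iid n hn) (aeval (vfun n)) (by
    intro a ha
    have hle : Iid n hn ≤ RingHom.ker (aeval (vfun n) :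
        MvPolynomial (Fin n ⊕ Fin n) ℂ →ₐ[ℂ] MvPolynomial (Fin (n - 3)) A6) := by
      rw [Iid, Ideal.span_le]
      intro p hp
      rw [SetLike.mem_coe, RingHom.mem_ker]
      exact hkill n hn p hp
    exact hle ha)

@[simp] lemma phiBar_mk (p : MvPolynomial (Fin n ⊕ Fin n) ℂ) :
    phiBar n hn (Ideal.Quotient.mk (Iid n hn) p) = aeval (vfun n) p := rfl

noncomputable def wfun : Fin 6 → MvPolynomial (Fin n ⊕ Fin n) ℂ := fun i =>
  if (i : ℕ) = 0 then X (Sum.inl ⟨0, by omega⟩)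
  else if (i : ℕ) = 1 then X (Sum.inl ⟨1, by omega⟩)
  else if (i : ℕ) = 2 then X (Sum.inl ⟨n - 1, by omega⟩)
  else if (i : ℕ) = 3 then X (Sum.inr ⟨0, by omega⟩)
  else if (i : ℕ) = 4 then X (Sum.inr ⟨1, by omega⟩)
  else X (Sum.inr ⟨2, by omega⟩)

lemma wfun0 : wfun n hn 0 = X (Sum.inl ⟨0, by omega⟩) := by norm_num [wfun]
lemma wfun1 : wfun n hn 1 = X (Sum.inl ⟨1, by omega⟩) := by norm_num [wfun]
lemma wfun2 : wfun n hn 2 = X (Sum.inl ⟨n - 1, by omega⟩) := by norm_num [wfun]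
lemma wfun3 : wfun n hn 3 = X (Sum.inr ⟨0, by omega⟩) := by norm_num [wfun, show ((3:Fin 6):ℕ) = 3 from rfl]
lemma wfun4 : wfun n hn 4 = X (Sum.inr ⟨1, by omega⟩) := by norm_num [wfun, show ((4:Fin 6):ℕ) = 4 from rfl]
lemma wfun5 : wfun n hn 5 = X (Sum.inr ⟨2, by omega⟩) := by norm_num [wfun, show ((5:Fin 6):ℕ) = 5 from rfl]

noncomputable def psi0 : A6 →ₐ[ℂ]
    (MvPolynomial (Fin n ⊕ Fin n) ℂ ⧸ Iid n hn) :=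
  Ideal.Quotient.liftₐ J6
    ((Ideal.Quotient.mkₐ ℂ (Iid n hn)).comp (aeval (wfun n hn))) (by
    intro a ha
    have hle : J6 ≤ RingHom.ker ((Ideal.Quotient.mkₐ ℂ (Iid n hn)).comp
        (aeval (wfun n hn))) := by
      rw [J6, Ideal.span_le]
      intro p hp
      simp only [Set.mem_insert_iff, Set.mem_singleton_iff] at hp
      have mem : ∀ q ∈ SGen n hn,
          (Ideal.Quotient.mk (Iid n hn)) q = 0 := fun q hq =>
        Ideal.Quotient.eq_zero_iff_mem.mpr (Ideal.subset_span hq)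
      rcases hp with rfl | rfl | rfl | rfl | rfl <;>
        · simp only [SetLike.mem_coe, RingHom.mem_ker, AlgHom.coe_comp,
            Function.comp_apply, map_sub, map_mul, map_pow, aeval_X,
            Ideal.Quotient.mkₐ_eq_mk, wfun0, wfun1, wfun2, wfun3, wfun4, wfun5]
          first
          | rw [← map_mul, ← map_mul, ← map_sub]
          | rw [← map_pow, ← map_mul, ← map_sub]
          apply mem
          simp only [SGen, Set.mem_union]
          exact Or.inl (Or.inl (Or.inl (Or.inl (Or.inl (by simp)))))
    exact hle ha)

@[simp] lemma psi0_av (i : Fin 6) :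
    psi0 n hn (av i) = Ideal.Quotient.mk (Iid n hn) (wfun n hn i) := by
  change (Ideal.Quotient.mkₐ ℂ (Iid n hn)) (aeval (wfun n hn) (X i)) = _
  simp

noncomputable def psi : MvPolynomial (Fin (n - 3)) A6 →ₐ[ℂ]
    (MvPolynomial (Fin n ⊕ Fin n) ℂ ⧸ Iid n hn) :=
  aevalTower (psi0 n hn)
    (fun j => Ideal.Quotient.mk (Iid n hn)
      (X (Sum.inr ⟨(j : ℕ) + 3, by have := j.isLt; omega⟩)))

end

section
variable (n : ℕ) (hn : n ≥ 3)

lemma psi_comp_phiBar :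
    (psi n hn).comp (phiBar n hn) =
      AlgHom.id ℂ (MvPolynomial (Fin n ⊕ Fin n) ℂ ⧸ Iid n hn) := by
  apply Ideal.Quotient.algHom_ext
  apply MvPolynomial.algHom_ext
  intro s
  simp only [AlgHom.coe_comp, Function.comp_apply, Ideal.Quotient.mkₐ_eq_mk,
    AlgHom.id_apply, phiBar_mk, aeval_X]
  obtain (⟨kv, hk⟩ | ⟨kv, hk⟩) := s
  · by_cases h0 : kv = 0
    · subst h0
      rw [vfun_inl0 n hn, psi, aevalTower_C, psi0_av, wfun0]
    · by_cases h1 : kv = 1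
      · subst h1
        rw [vfun_inl1 n hn, psi, aevalTower_C, psi0_av, wfun1]
      · by_cases h2 : kv = n - 1
        · subst h2
          rw [vfun_inlN n hn, psi, aevalTower_C, psi0_av, wfun2]
        · have hzwei : 2 ≤ kv := by omega
          have hnm2 : kv ≤ n - 2 := by omega
          rw [vfun_inlMid n hn ⟨kv, hk⟩ hzwei hnm2, psi, map_mul, aevalTower_C,
            aevalTower_X, psi0_av, wfun2, ← map_mul]
          rw [show (⟨kv - 2 + 3, by omega⟩ : Fin n) = ⟨kv + 1, by omega⟩ from by
            rw [Fin.mk_eq_mk]; omega]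
          rw [Ideal.Quotient.eq]
          have hmem : (X (Sum.inl ⟨kv, hk⟩) -
              X (Sum.inl ⟨n - 1, by omega⟩) * X (Sum.inr ⟨kv + 1, by omega⟩) :
              MvPolynomial (Fin n ⊕ Fin n) ℂ) ∈ Iid n hn := by
            apply Ideal.subset_span
            simp only [SGen, Set.mem_union]
            exact Or.inl (Or.inr ⟨⟨kv + 1, by omega⟩, by change 3 ≤ kv + 1; omega, by change kv + 1 ≤ n - 1; omega, rfl⟩)
          have := (Iid n hn).neg_mem hmem
          rwa [neg_sub] at this
  · by_cases h3 : kv < 3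
    · rw [vfun_inr_lt n ⟨kv, hk⟩ h3, psi, aevalTower_C, psi0_av]
      interval_cases kv
      · rw [show ((⟨0 + 3, by omega⟩ : Fin 6)) = 3 from rfl, wfun3]
      · rw [show ((⟨1 + 3, by omega⟩ : Fin 6)) = 4 from rfl, wfun4]
      · rw [show ((⟨2 + 3, by omega⟩ : Fin 6)) = 5 from rfl, wfun5]
    · rw [vfun_inr_ge n hn ⟨kv, hk⟩ (by change 3 ≤ kv; omega), psi, aevalTower_X]
      rw [show (⟨kv - 3 + 3, by omega⟩ : Fin n) = ⟨kv, hk⟩ from by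
        rw [Fin.mk_eq_mk]; omega]

end

section
variable (n : ℕ) (hn : n ≥ 3)

lemma phiBar_psi_C (i : Fin 6) :
    (phiBar n hn) ((psi n hn) (C (av i))) = C (av i) := by
  rw [psi, aevalTower_C, psi0_av, phiBar_mk]
  obtain ⟨iv, hi⟩ := i
  interval_cases iv
  · show (aeval (vfun n)) (wfun n hn 0) = C (av 0)
    rw [wfun0, aeval_X, vfun_inl0 n hn]
  · show (aeval (vfun n)) (wfun n hn 1) = C (av 1)
    rw [wfun1, aeval_X, vfun_inl1 n hn]
  · show (aeval (vfun n)) (wfun n hn 2) = C (av 2)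
    rw [wfun2, aeval_X, vfun_inlN n hn]
  · show (aeval (vfun n)) (wfun n hn 3) = C (av 3)
    rw [wfun3, aeval_X, vfun_inr0 n hn]
  · show (aeval (vfun n)) (wfun n hn 4) = C (av 4)
    rw [wfun4, aeval_X, vfun_inr1 n hn]
  · show (aeval (vfun n)) (wfun n hn 5) = C (av 5)
    rw [wfun5, aeval_X, vfun_inr2 n hn]

lemma phiBar_comp_psi :
    (phiBar n hn).comp (psi n hn) =
      AlgHom.id ℂ (MvPolynomial (Fin (n - 3)) A6) := by
  refine AlgHom.ext fun x => ?_
  have hR : (((phiBar n hn).comp (psi n hn)) :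
        MvPolynomial (Fin (n - 3)) A6 →+* MvPolynomial (Fin (n - 3)) A6) =
      ((AlgHom.id ℂ (MvPolynomial (Fin (n - 3)) A6)) :
        MvPolynomial (Fin (n - 3)) A6 →+* MvPolynomial (Fin (n - 3)) A6) := by
    apply MvPolynomial.ringHom_ext
    · intro a
      obtain ⟨q, rfl⟩ := Ideal.Quotient.mk_surjective a
      simp only [RingHom.coe_coe, AlgHom.coe_comp, Function.comp_apply, AlgHom.id_apply]
      induction q using MvPolynomial.induction_on with
      | C c =>
        have h1 : (C ((Ideal.Quotient.mk J6) (C c)) : MvPolynomial (Fin (n - 3)) A6) =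
            algebraMap ℂ (MvPolynomial (Fin (n - 3)) A6) c := rfl
        rw [h1, AlgHom.commutes, AlgHom.commutes]
      | add p q hp hq =>
        rw [map_add (Ideal.Quotient.mk J6), C_add, map_add (psi n hn),
          map_add (phiBar n hn), hp, hq]
      | mul_X p i hp =>
        simp only [map_mul, hp]
        congr 1
        exact phiBar_psi_C n hn i
    · intro j
      simp only [RingHom.coe_coe, AlgHom.coe_comp, Function.comp_apply, AlgHom.id_apply]
      rw [psi, aevalTower_X, phiBar_mk, aeval_X,
        vfun_inr_ge n hn ⟨(j : ℕ) + 3, by have := j.isLt; omega⟩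
          (by change 3 ≤ (j : ℕ) + 3; omega)]
      congr 1
      all_goals first
        | rfl
        | (rw [Fin.mk_eq_mk]; omega)
        | omega
  exact RingHom.congr_fun hR x

end

end Stmt11Aux

/-- Let `n ≥ 3`. In `ℂ[x₁,…,xₙ,u₀,u₁,…,u_{n−1}]` (with `xₖ = X (Sum.inl ⟨k-1⟩)` for
`1 ≤ k ≤ n` and `uₖ = X (Sum.inr ⟨k⟩)` for `0 ≤ k ≤ n−1`), the quotient by the ideal
generated by `x₁u₁−x₂u₀`, `x₁u₂−x₂u₁`, `x₁²−xₙu₀`, `x₁x₂−xₙu₁`, `x₂²−xₙu₂`, and, for all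
`3 ≤ i, j ≤ n−1`, the elements `x₁²uᵢ−xᵢu₀`, `x₁x₂uᵢ−xᵢu₁`, `x₂²uᵢ−xᵢu₂`, `xᵢ−xₙuᵢ` and
`xᵢuⱼ−xⱼuᵢ`, is isomorphic as a `ℂ`-algebra to the polynomial ring in `n−3` variables over
`A = ℂ[x₁,x₂,xₙ,u₀,u₁,u₂]/(x₁u₁−x₂u₀, x₁u₂−x₂u₁, x₁²−xₙu₀, x₁x₂−xₙu₁, x₂²−xₙu₂)`
(in `A`: `x₁ = X 0`, `x₂ = X 1`, `xₙ = X 2`, `u₀ = X 3`, `u₁ = X 4`, `u₂ = X 5`). -/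
theorem stmt11 (n : ℕ) (hn : 3 ≤ n) :
    Nonempty
      ((MvPolynomial (Fin n ⊕ Fin n) ℂ ⧸
          Ideal.span
            (({X (Sum.inl ⟨0, by omega⟩) * X (Sum.inr ⟨1, by omega⟩) -
                 X (Sum.inl ⟨1, by omega⟩) * X (Sum.inr ⟨0, by omega⟩),
               X (Sum.inl ⟨0, by omega⟩) * X (Sum.inr ⟨2, by omega⟩) -
                 X (Sum.inl ⟨1, by omega⟩) * X (Sum.inr ⟨1, by omega⟩),
               X (Sum.inl ⟨0, by omega⟩) ^ 2 -
                 X (Sum.inl ⟨n - 1, by omega⟩) * X (Sum.inr ⟨0, by omega⟩),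
               X (Sum.inl ⟨0, by omega⟩) * X (Sum.inl ⟨1, by omega⟩) -
                 X (Sum.inl ⟨n - 1, by omega⟩) * X (Sum.inr ⟨1, by omega⟩),
               X (Sum.inl ⟨1, by omega⟩) ^ 2 -
                 X (Sum.inl ⟨n - 1, by omega⟩) * X (Sum.inr ⟨2, by omega⟩)} ∪
              {p | ∃ i : Fin n, 3 ≤ (i : ℕ) ∧ (i : ℕ) ≤ n - 1 ∧
                 p = X (Sum.inl ⟨0, by omega⟩) ^ 2 * X (Sum.inr i) -
                   X (Sum.inl ⟨(i : ℕ) - 1, by have := i.isLt; omega⟩) *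
                     X (Sum.inr ⟨0, by omega⟩)} ∪
              {p | ∃ i : Fin n, 3 ≤ (i : ℕ) ∧ (i : ℕ) ≤ n - 1 ∧
                 p = X (Sum.inl ⟨0, by omega⟩) * X (Sum.inl ⟨1, by omega⟩) * X (Sum.inr i) -
                   X (Sum.inl ⟨(i : ℕ) - 1, by have := i.isLt; omega⟩) *
                     X (Sum.inr ⟨1, by omega⟩)} ∪
              {p | ∃ i : Fin n, 3 ≤ (i : ℕ) ∧ (i : ℕ) ≤ n - 1 ∧
                 p = X (Sum.inl ⟨1, by omega⟩) ^ 2 * X (Sum.inr i) -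
                   X (Sum.inl ⟨(i : ℕ) - 1, by have := i.isLt; omega⟩) *
                     X (Sum.inr ⟨2, by omega⟩)} ∪
              {p | ∃ i : Fin n, 3 ≤ (i : ℕ) ∧ (i : ℕ) ≤ n - 1 ∧
                 p = X (Sum.inl ⟨(i : ℕ) - 1, by have := i.isLt; omega⟩) -
                   X (Sum.inl ⟨n - 1, by omega⟩) * X (Sum.inr i)} ∪
              {p | ∃ i j : Fin n, 3 ≤ (i : ℕ) ∧ (i : ℕ) ≤ n - 1 ∧
                 3 ≤ (j : ℕ) ∧ (j : ℕ) ≤ n - 1 ∧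
                 p = X (Sum.inl ⟨(i : ℕ) - 1, by have := i.isLt; omega⟩) * X (Sum.inr j) -
                   X (Sum.inl ⟨(j : ℕ) - 1, by have := j.isLt; omega⟩) * X (Sum.inr i)} :
              Set (MvPolynomial (Fin n ⊕ Fin n) ℂ)))) ≃ₐ[ℂ]
        MvPolynomial (Fin (n - 3))
          (MvPolynomial (Fin 6) ℂ ⧸
            Ideal.span {(X 0 * X 4 - X 1 * X 3 : MvPolynomial (Fin 6) ℂ),
              X 0 * X 5 - X 1 * X 4, X 0 ^ 2 - X 2 * X 3,
              X 0 * X 1 - X 2 * X 4, X 1 ^ 2 - X 2 * X 5})) :=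
  ⟨AlgEquiv.ofAlgHom (phiBar n hn) (psi n hn)
    (phiBar_comp_psi n hn) (psi_comp_phiBar n hn)⟩
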